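/- arXiv:2410.06789 — 9 statements merged into one kernel-verified Lean document; each statement's English description precedes it below -/
import Mathlib

section
/- Let k ≥ 1 be an integer and α ∈ ℂ. Then |α(α+1)⋯(α+k-1)|/k! ≤ e^{|α|-1} k^{|α|-1} if |α| > 1, and |α(α+1)⋯(α+k-1)|/k! ≤ (k+1)^{-(1-|α|)} if |α| ≤ 1. In particular, |binom(α,k)| ≤ (|α|)_k / k! ≤ e^{|α|} k^{|α|} for k ≥ 1. -/
open Finset

lemma aux_pointwise (a : ℝ) (c : ℝ) (i : ℕ) (h : a - 1 ≤ c) :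
    a + i ≤ ((i:ℝ)+1) * Real.exp (c * ((i:ℝ)+1)⁻¹) := by
  have h0 : (0:ℝ) < (i:ℝ)+1 := by positivity
  have h1 : c * ((i:ℝ)+1)⁻¹ + 1 ≤ Real.exp (c * ((i:ℝ)+1)⁻¹) := Real.add_one_le_exp _
  calc a + i ≤ ((i:ℝ)+1) * (c * ((i:ℝ)+1)⁻¹ + 1) := by
        field_simp
        nlinarith
    _ ≤ ((i:ℝ)+1) * Real.exp (c * ((i:ℝ)+1)⁻¹) := by
        exact mul_le_mul_of_nonneg_left h1 h0.le

lemma aux_prod (k : ℕ) (a c : ℝ) (ha : 0 ≤ a) (hc : a - 1 ≤ c) :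
    (∏ i ∈ range k, (a + (i:ℝ))) / k.factorial ≤ Real.exp (c * (harmonic k : ℝ)) := by
  have hfact : (k.factorial : ℝ) = ∏ i ∈ range k, ((i:ℝ)+1) := by
    rw [← Finset.prod_range_add_one_eq_factorial]; push_cast; rfl
  have hH : (harmonic k : ℝ) = ∑ i ∈ range k, ((i:ℝ)+1)⁻¹ := by
    simp [harmonic]
  have hle : (∏ i ∈ range k, (a + (i:ℝ))) ≤
      ∏ i ∈ range k, (((i:ℝ)+1) * Real.exp (c * ((i:ℝ)+1)⁻¹)) :=
    Finset.prod_le_prod (fun i _ => by positivity) (fun i _ => aux_pointwise a c i hc)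
  rw [Finset.prod_mul_distrib, ← Real.exp_sum, ← Finset.mul_sum] at hle
  rw [div_le_iff₀ (by positivity)]
  rw [hfact, hH]
  linarith [hle]

/-- Let `k ≥ 1` and `α ∈ ℂ`.  Then `|α(α+1)⋯(α+k-1)|/k! ≤ e^{|α|-1} k^{|α|-1}` if
`|α| > 1`, and `|α(α+1)⋯(α+k-1)|/k! ≤ (k+1)^{-(1-|α|)}` if `|α| ≤ 1`.  In particular,
`|binom(α,k)| ≤ (|α|)_k / k! ≤ e^{|α|} k^{|α|}`. -/
theorem pochhammer_abs_estimates (k : ℕ) (hk : 1 ≤ k) (α : ℂ) :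
    (1 < ‖α‖ →
      ‖∏ i ∈ range k, (α + (i : ℂ))‖ / (k.factorial : ℝ) ≤
        Real.exp (‖α‖ - 1) * (k : ℝ) ^ (‖α‖ - 1)) ∧
    (‖α‖ ≤ 1 →
      ‖∏ i ∈ range k, (α + (i : ℂ))‖ / (k.factorial : ℝ) ≤
        ((k : ℝ) + 1) ^ (-(1 - ‖α‖))) ∧
    ‖∏ i ∈ range k, (α - (i : ℂ))‖ / (k.factorial : ℝ) ≤
      (∏ i ∈ range k, (‖α‖ + (i : ℝ))) / (k.factorial : ℝ) ∧
    (∏ i ∈ range k, (‖α‖ + (i : ℝ))) / (k.factorial : ℝ) ≤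
      Real.exp (‖α‖) * (k : ℝ) ^ (‖α‖) := by
  set a := ‖α‖ with ha_def
  have ha : 0 ≤ a := norm_nonneg α
  have hfpos : (0:ℝ) < k.factorial := by positivity
  have hk0 : (0:ℝ) < (k:ℝ) := by exact_mod_cast hk
  have habs_add : ‖∏ i ∈ range k, (α + (i : ℂ))‖ ≤ ∏ i ∈ range k, (a + (i:ℝ)) := by
    rw [norm_prod]
    refine Finset.prod_le_prod (fun i _ => norm_nonneg _) (fun i _ => ?_)
    simpa [Complex.norm_natCast] using norm_add_le α (i:ℂ)
  have habs_sub : ‖∏ i ∈ range k, (α - (i : ℂ))‖ ≤ ∏ i ∈ range k, (a + (i:ℝ)) := by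
    rw [norm_prod]
    refine Finset.prod_le_prod (fun i _ => norm_nonneg _) (fun i _ => ?_)
    rw [sub_eq_add_neg]
    simpa [Complex.norm_natCast] using norm_add_le α (-(i:ℂ))
  have hHle : (harmonic k : ℝ) ≤ 1 + Real.log k := harmonic_le_one_add_log k
  have hHge : Real.log (k + 1) ≤ (harmonic k : ℝ) := by
    have := log_add_one_le_harmonic k
    push_cast at this ⊢
    linarith
  refine ⟨?_, ?_, ?_, ?_⟩
  · intro h1
    have hmain := aux_prod k a (a - 1) ha le_rfl
    refine (div_le_div_of_nonneg_right habs_add hfpos.le).trans (hmain.trans ?_)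
    rw [Real.rpow_def_of_pos hk0, ← Real.exp_add]
    apply Real.exp_le_exp.mpr
    have : (a - 1) * (harmonic k : ℝ) ≤ (a - 1) * (1 + Real.log k) :=
      mul_le_mul_of_nonneg_left hHle (by linarith)
    nlinarith [this]
  · intro h1
    have hmain := aux_prod k a (a - 1) ha le_rfl
    refine (div_le_div_of_nonneg_right habs_add hfpos.le).trans (hmain.trans ?_)
    rw [Real.rpow_def_of_pos (by positivity), Real.exp_le_exp]
    have : (a - 1) * (harmonic k : ℝ) ≤ (a - 1) * Real.log (k + 1) := by
      rcases eq_or_lt_of_le h1 with h | h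
      · simp [h]
      · exact (mul_le_mul_of_nonpos_left hHge (by linarith))
    nlinarith [this]
  · exact div_le_div_of_nonneg_right habs_sub hfpos.le
  · have hmain := aux_prod k a a ha (by linarith)
    refine hmain.trans ?_
    rw [Real.rpow_def_of_pos hk0, ← Real.exp_add, Real.exp_le_exp]
    have : a * (harmonic k : ℝ) ≤ a * (1 + Real.log k) := mul_le_mul_of_nonneg_left hHle ha
    nlinarith [this]
end

section
/- Let K be a field of characteristic 0, Δ(P)(t) = P(t-1) − P(t) the backward difference operator on K[t], and Δ₁(P)(t) = P(t+1) − P(t) the forward difference, with τ₁(P)(t) = P(t+1). Then for every positive integer n and every P ∈ K[t], the operator identity [P(t)]∘Δ^n = Σ_{j=0}^n C(n,j) Δ^{n-j} ∘ [τ₁^{n-j}(Δ₁^j(P))] holds in End_K(K[t]), where [Q] denotes multiplication by the polynomial Q. -/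
open Polynomial Finset

/-- Backward difference operator `Δ(P)(t) = P(t-1) - P(t)` on `K[t]`. -/
noncomputable def bdiff {K : Type*} [Field K] (P : Polynomial K) : Polynomial K :=
  P.comp (X - 1) - P

/-- Forward difference operator `Δ₁(P)(t) = P(t+1) - P(t)` on `K[t]`. -/
noncomputable def fdiff {K : Type*} [Field K] (P : Polynomial K) : Polynomial K :=
  P.comp (X + 1) - P

/-- Forward shift operator `τ₁(P)(t) = P(t+1)` on `K[t]`. -/
noncomputable def fshift {K : Type*} [Field K] (P : Polynomial K) : Polynomial K :=
  P.comp (X + 1)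

lemma bdiff_add {K : Type*} [Field K] (P Q : Polynomial K) :
    bdiff (P + Q) = bdiff P + bdiff Q := by
  simp [bdiff, add_comp]; ring

lemma bdiff_natCast_mul {K : Type*} [Field K] (c : ℕ) (P : Polynomial K) :
    bdiff ((c : Polynomial K) * P) = (c : Polynomial K) * bdiff P := by
  simp [bdiff, mul_comp, natCast_comp, mul_sub]

lemma bdiff_iter_add {K : Type*} [Field K] (k : ℕ) (P Q : Polynomial K) :
    bdiff^[k] (P + Q) = bdiff^[k] P + bdiff^[k] Q := by
  induction k generalizing P Q with
  | zero => simp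
  | succ k ih => simp [Function.iterate_succ_apply, bdiff_add, ih]

lemma bdiff_iter_natCast_mul {K : Type*} [Field K] (k : ℕ) (c : ℕ) (P : Polynomial K) :
    bdiff^[k] ((c : Polynomial K) * P) = (c : Polynomial K) * bdiff^[k] P := by
  induction k generalizing P with
  | zero => simp
  | succ k ih => simp [Function.iterate_succ_apply, bdiff_natCast_mul, ih]

lemma fdiff_fshift {K : Type*} [Field K] (P : Polynomial K) :
    fdiff (fshift P) = fshift (fdiff P) := by
  simp [fdiff, fshift, sub_comp]

lemma fdiff_fshift_iter {K : Type*} [Field K] (k : ℕ) (P : Polynomial K) :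
    fdiff (fshift^[k] P) = fshift^[k] (fdiff P) := by
  induction k generalizing P with
  | zero => simp
  | succ k ih => simp [Function.iterate_succ_apply, ih, fdiff_fshift]

/-- Key commutation: `[P]∘Δ = Δ∘[τ₁P] + [Δ₁P]`. -/
lemma mul_bdiff_key {K : Type*} [Field K] (P R : Polynomial K) :
    P * bdiff R = bdiff (fshift P * R) + fdiff P * R := by
  have h : ((X : Polynomial K) + 1).comp (X - 1) = X := by
    simp [add_comp]
  simp only [bdiff, fdiff, fshift, mul_comp]
  rw [comp_assoc, h, comp_X]
  ring

theorem mul_comp_bdiff_pow_aux {K : Type*} [Field K] (n : ℕ) (P : Polynomial K) :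
    ∀ R : Polynomial K,
      P * bdiff^[n] R =
        ∑ j ∈ range (n + 1),
          (n.choose j : Polynomial K) * bdiff^[n - j] ((fshift^[n - j] (fdiff^[j] P)) * R) := by
  induction n with
  | zero => intro R; simp
  | succ n ih =>
    intro R
    have step : P * bdiff^[n + 1] R
        = ∑ j ∈ range (n + 1), (n.choose j : Polynomial K) *
            (bdiff^[n + 1 - j] ((fshift^[n + 1 - j] (fdiff^[j] P)) * R)
              + bdiff^[n - j] ((fshift^[n - j] (fdiff^[j + 1] P)) * R)) := by
      rw [Function.iterate_succ_apply, ih (bdiff R)]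
      refine Finset.sum_congr rfl fun j hj => ?_
      have hjn : j ≤ n := Nat.lt_succ_iff.mp (Finset.mem_range.mp hj)
      have hsub : n + 1 - j = (n - j) + 1 := by omega
      rw [mul_bdiff_key, bdiff_iter_add, hsub]
      congr 2
      · simp only [← Function.iterate_succ_apply' fshift,
          ← Function.iterate_succ_apply bdiff, Nat.succ_eq_add_one]
      · rw [fdiff_fshift_iter]
        simp only [← Function.iterate_succ_apply' fdiff, Nat.succ_eq_add_one]
    rw [step]
    -- abbreviate the terms
    set T : ℕ → Polynomial K := fun j =>
      bdiff^[n + 1 - j] ((fshift^[n + 1 - j] (fdiff^[j] P)) * R) with hT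
    have hT' : ∀ j, bdiff^[n - j] ((fshift^[n - j] (fdiff^[j + 1] P)) * R) = T (j + 1) := by
      intro j
      simp [hT, Nat.succ_sub_succ]
    have goal_rhs : ∑ j ∈ range (n + 2), ((n + 1).choose j : Polynomial K) * T j
        = T 0 + ∑ j ∈ range (n + 1), ((n + 1).choose (j + 1) : Polynomial K) * T (j + 1) := by
      rw [Finset.sum_range_succ' (fun j => ((n + 1).choose j : Polynomial K) * T j) (n + 1)]
      simp [add_comm]
    calc ∑ j ∈ range (n + 1), (n.choose j : Polynomial K) *
            (T j + bdiff^[n - j] ((fshift^[n - j] (fdiff^[j + 1] P)) * R))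
        = ∑ j ∈ range (n + 1), ((n.choose j : Polynomial K) * T j
            + (n.choose j : Polynomial K) * T (j + 1)) := by
          refine Finset.sum_congr rfl fun j hj => ?_
          rw [hT' j, mul_add]
      _ = ∑ j ∈ range (n + 1), (n.choose j : Polynomial K) * T j
            + ∑ j ∈ range (n + 1), (n.choose j : Polynomial K) * T (j + 1) := by
          rw [Finset.sum_add_distrib]
      _ = T 0 + (∑ j ∈ range (n + 1), (n.choose (j + 1) : Polynomial K) * T (j + 1)
            + ∑ j ∈ range (n + 1), (n.choose j : Polynomial K) * T (j + 1)) := by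
          rw [Finset.sum_range_succ' (fun j => (n.choose j : Polynomial K) * T j) n]
          have : (n.choose (n + 1) : Polynomial K) * T (n + 1) = 0 := by
            simp [Nat.choose_succ_self]
          rw [Finset.sum_range_succ (fun j => (n.choose (j + 1) : Polynomial K) * T (j + 1)) n,
            this]
          simp only [Nat.choose_zero_right, Nat.cast_one, one_mul]
          ring
      _ = T 0 + ∑ j ∈ range (n + 1), ((n + 1).choose (j + 1) : Polynomial K) * T (j + 1) := by
          rw [← Finset.sum_add_distrib]
          congr 1
          refine Finset.sum_congr rfl fun j hj => ?_
          rw [Nat.choose_succ_succ (n := n) (k := j)]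
          push_cast
          ring
      _ = ∑ j ∈ range (n + 2), ((n + 1).choose j : Polynomial K) * T j := goal_rhs.symm

/-- Operator identity in `End_K(K[t])`: for `n ≥ 1` and `P ∈ K[t]`,
`[P(t)] ∘ Δ^n = Σ_{j=0}^n C(n,j) Δ^{n-j} ∘ [τ₁^{n-j}(Δ₁^j(P))]`,
where `[Q]` is multiplication by `Q`, applied to an arbitrary polynomial `R`. -/
theorem mul_comp_bdiff_pow {K : Type*} [Field K] [CharZero K] (n : ℕ) (hn : 1 ≤ n)
    (P : Polynomial K) :
    ∀ R : Polynomial K,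
      P * bdiff^[n] R =
        ∑ j ∈ range (n + 1),
          (n.choose j : Polynomial K) * bdiff^[n - j] ((fshift^[n - j] (fdiff^[j] P)) * R) := by
  exact mul_comp_bdiff_pow_aux n P
end

section
/- Let K be a field of characteristic 0, let d ≥ 1 and m_1,…,m_d, n ≥ 1 be integers, let α_1,…,α_d ∈ K, and set A(t) = Π_{i=1}^d (t+α_i)^{m_i+1} and A_n(t) = Π_{i=1}^d ((t+α_i)(t+α_i+1)⋯(t+α_i+n-1))^{m_i+1}. If P(t) ∈ A_n(t)·K[t] and Q(t) ∈ K[t] has degree < n, then Q(t)·Δ^n(P)(t) lies in Δ(A(t)·K[t]), where Δ(R)(t) = R(t-1) − R(t). -/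
open Polynomial Finset

section Aux

variable {K : Type*} [Field K]

lemma bdiff_sub (P Q : Polynomial K) : bdiff (P - Q) = bdiff P - bdiff Q := by
  simp only [bdiff, sub_comp]; ring

lemma An_dvd_succ (d n : ℕ) (m : Fin d → ℕ) (α : Fin d → K) :
    (∏ i, (∏ j ∈ range n, (X + C (α i) + (j : Polynomial K))) ^ (m i + 1)) ∣
      ∏ i, (∏ j ∈ range (n + 1), (X + C (α i) + (j : Polynomial K))) ^ (m i + 1) := by
  refine Finset.prod_dvd_prod_of_dvd _ _ fun i _ => pow_dvd_pow_of_dvd ?_ _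
  exact Finset.prod_dvd_prod_of_subset _ _ _ (range_subset_range.2 (Nat.le_succ n))

lemma An_dvd_comp (d n : ℕ) (m : Fin d → ℕ) (α : Fin d → K) :
    (∏ i, (∏ j ∈ range n, (X + C (α i) + (j : Polynomial K))) ^ (m i + 1)) ∣
      (∏ i, (∏ j ∈ range (n + 1), (X + C (α i) + (j : Polynomial K))) ^ (m i + 1)).comp
        (X - 1) := by
  rw [Polynomial.prod_comp]
  refine Finset.prod_dvd_prod_of_dvd _ _ fun i _ => ?_
  rw [pow_comp]
  refine pow_dvd_pow_of_dvd ?_ _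
  rw [Polynomial.prod_comp, Finset.prod_range_succ']
  have : ∀ j ∈ range n,
      (X + C (α i) + ((j + 1 : ℕ) : Polynomial K)).comp (X - 1)
        = X + C (α i) + (j : Polynomial K) := by
    intro j _
    push_cast
    simp only [add_comp, X_comp, C_comp, natCast_comp, one_comp]
    ring
  rw [Finset.prod_congr rfl this]
  exact dvd_mul_right _ _

lemma A_dvd_iter (d : ℕ) (m : Fin d → ℕ) (α : Fin d → K) :
    ∀ n (P : Polynomial K),
      (∏ i, (∏ j ∈ range (n + 1), (X + C (α i) + (j : Polynomial K))) ^ (m i + 1)) ∣ P →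
      (∏ i, (X + C (α i)) ^ (m i + 1)) ∣ bdiff^[n] P := by
  intro n
  induction n with
  | zero =>
      intro P hP
      simpa using hP
  | succ n ih =>
      intro P hP
      rw [Function.iterate_succ_apply]
      refine ih _ ?_
      have h1 : (∏ i, (∏ j ∈ range (n + 1), (X + C (α i) + (j : Polynomial K))) ^ (m i + 1)) ∣
          P.comp (X - 1) := by
        obtain ⟨W, rfl⟩ := hP
        rw [mul_comp]
        exact dvd_mul_of_dvd_left (An_dvd_comp d (n + 1) m α) _
      have h2 : (∏ i, (∏ j ∈ range (n + 1), (X + C (α i) + (j : Polynomial K))) ^ (m i + 1)) ∣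
          P := (An_dvd_succ d (n + 1) m α).trans hP
      exact dvd_sub h1 h2

end Aux

/-- Let `K` be a field of characteristic `0`, `d ≥ 1`, `m_1, …, m_d, n ≥ 1`,
`α_1, …, α_d ∈ K`, and set `A(t) = Π_i (t+α_i)^{m_i+1}` and
`A_n(t) = Π_i ((t+α_i)(t+α_i+1)⋯(t+α_i+n-1))^{m_i+1}`.  If `A_n ∣ P` and
`deg Q < n`, then `Q·Δ^n(P) ∈ Δ(A·K[t])`. -/
theorem bdiff_pow_mem_image {K : Type*} [Field K] [CharZero K]
    (d : ℕ) (hd : 1 ≤ d) (m : Fin d → ℕ) (hm : ∀ i, 1 ≤ m i) (n : ℕ) (hn : 1 ≤ n)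
    (α : Fin d → K) (P Q : Polynomial K)
    (hP : (∏ i, (∏ j ∈ range n, (X + C (α i) + (j : Polynomial K))) ^ (m i + 1)) ∣ P)
    (hQ : Q.degree < n) :
    ∃ R : Polynomial K,
      Q * bdiff^[n] P = bdiff ((∏ i, (X + C (α i)) ^ (m i + 1)) * R) := by
  clear hd hm hn
  induction n generalizing P Q with
  | zero =>
      have hQ0 : Q = 0 := by
        rw [← degree_eq_bot]
        simpa using hQ
      exact ⟨0, by simp [hQ0, bdiff]⟩
  | succ n ih =>
      set A : Polynomial K := ∏ i, (X + C (α i)) ^ (m i + 1) with hA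
      set V : Polynomial K := bdiff^[n] P with hV
      obtain ⟨W, hW⟩ : A ∣ V := A_dvd_iter d m α n P hP
      set U : Polynomial K := Q.comp (X + 1) with hU
      have hUQ : U.comp (X - 1) = Q := by
        rw [hU, comp_assoc]
        simp
      have hdeg : (bdiff U).degree < (n : WithBot ℕ) := by
        rcases eq_or_ne Q 0 with rfl | hQ0
        · simp [bdiff, hU]
        · have hU0 : U ≠ 0 := fun h => by simp [h] at hUQ; exact hQ0 hUQ.symm
          have hcomp0 : U.comp (X - 1) ≠ 0 := hUQ ▸ hQ0
          have hnd : (X - 1 : Polynomial K).natDegree = 1 := by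
            simpa using natDegree_X_sub_C (1 : K)
          have hdc : (U.comp (X - 1)).degree = U.degree := by
            rw [degree_eq_natDegree hcomp0, degree_eq_natDegree hU0, natDegree_comp,
              hnd, mul_one]
          have hlc : (U.comp (X - 1)).leadingCoeff = U.leadingCoeff := by
            rw [leadingCoeff_comp (by rw [hnd]; exact one_ne_zero)]
            have : (X - 1 : Polynomial K).leadingCoeff = 1 := by
              simpa using (monic_X_sub_C (1 : K)).leadingCoeff
            rw [this, one_pow, mul_one]
          have hlt : (bdiff U).degree < U.degree := by
            rw [← hdc]
            exact degree_sub_lt hdc hcomp0 hlc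
          have hUdeg : U.degree ≤ (n : WithBot ℕ) := by
            have : U.degree = Q.degree := by rw [← hUQ, hdc]
            rw [this]
            exact Order.lt_succ_iff.mp (by exact_mod_cast hQ)
          exact lt_of_lt_of_le hlt hUdeg
      obtain ⟨R₁, hR₁⟩ := ih P (bdiff U) ((An_dvd_succ d n m α).trans hP) hdeg
      refine ⟨U * W - R₁, ?_⟩
      have key : Q * bdiff V = bdiff (U * V) - bdiff U * V := by
        simp only [bdiff, mul_comp, ← hUQ]
        ring
      have hRV : bdiff U * V = bdiff (A * R₁) := by rw [hV]; exact hR₁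
      have hUV : U * V = A * (U * W) := by rw [hW]; ring
      calc Q * bdiff^[n + 1] P = Q * bdiff V := by
            rw [Function.iterate_succ_apply', hV]
        _ = bdiff (U * V) - bdiff U * V := key
        _ = bdiff (A * (U * W)) - bdiff (A * R₁) := by rw [hUV, hRV]
        _ = bdiff (A * (U * W - R₁)) := by rw [← bdiff_sub, mul_sub]
end

section
/- For every integer j ≥ 0, the identity ((z)_j − (t)_j)/(z − t) = (z)_j · Σ_{k=0}^{j-1} (t)_k / (z)_{k+1} holds in the field of rational functions ℚ(z,t), where (x)_j = x(x+1)⋯(x+j-1). -/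
open Finset

/-- The field of rational functions `ℚ(z,t)`. -/
abbrev RatFunc2 : Type := FractionRing (MvPolynomial (Fin 2) ℚ)

/-- The element `z` of `ℚ(z,t)`. -/
noncomputable def zvar : RatFunc2 :=
  algebraMap (MvPolynomial (Fin 2) ℚ) RatFunc2 (MvPolynomial.X 0)

/-- The element `t` of `ℚ(z,t)`. -/
noncomputable def tvar : RatFunc2 :=
  algebraMap (MvPolynomial (Fin 2) ℚ) RatFunc2 (MvPolynomial.X 1)

lemma zvar_add_ne (i : ℕ) : zvar + (i : RatFunc2) ≠ 0 := by
  have : zvar + (i : RatFunc2)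
      = algebraMap (MvPolynomial (Fin 2) ℚ) RatFunc2 (MvPolynomial.X 0 + (i : MvPolynomial (Fin 2) ℚ)) := by
    simp [zvar, map_add, map_natCast]
  rw [this]
  rw [map_ne_zero_iff _ (IsFractionRing.injective (MvPolynomial (Fin 2) ℚ) RatFunc2)]
  intro h
  have := congrArg (MvPolynomial.eval fun _ => (1 : ℚ) - i) h
  simp at this

lemma zvar_sub_tvar_ne : zvar - tvar ≠ 0 := by
  have : zvar - tvar
      = algebraMap (MvPolynomial (Fin 2) ℚ) RatFunc2 (MvPolynomial.X 0 - MvPolynomial.X 1) := by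
    simp [zvar, tvar, map_sub]
  rw [this]
  rw [map_ne_zero_iff _ (IsFractionRing.injective (MvPolynomial (Fin 2) ℚ) RatFunc2)]
  intro h
  have := congrArg (MvPolynomial.eval fun k => if k = 0 then (1 : ℚ) else 0) h
  simp at this

lemma zprod_ne (n : ℕ) : (∏ i ∈ range n, (zvar + (i : RatFunc2))) ≠ 0 :=
  prod_ne_zero_iff.mpr fun i _ => zvar_add_ne i

/-- For every `j ≥ 0`, `((z)_j − (t)_j)/(z − t) = (z)_j · Σ_{k=0}^{j-1} (t)_k/(z)_{k+1}`
in `ℚ(z,t)`, where `(x)_j = x(x+1)⋯(x+j-1)` is the rising factorial. -/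
theorem pochhammer_diff_div (j : ℕ) :
    ((∏ i ∈ range j, (zvar + (i : RatFunc2))) - ∏ i ∈ range j, (tvar + (i : RatFunc2))) /
        (zvar - tvar) =
      (∏ i ∈ range j, (zvar + (i : RatFunc2))) *
        ∑ k ∈ range j,
          (∏ i ∈ range k, (tvar + (i : RatFunc2))) /
            (∏ i ∈ range (k + 1), (zvar + (i : RatFunc2))) := by
  induction j with
  | zero => simp
  | succ j ih =>
    set P := ∏ i ∈ range j, (zvar + (i : RatFunc2)) with hP
    set Q := ∏ i ∈ range j, (tvar + (i : RatFunc2)) with hQ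
    rw [sum_range_succ, prod_range_succ, prod_range_succ, ← hP, ← hQ]
    have hPz : P * (zvar + (j : RatFunc2)) ≠ 0 :=
      mul_ne_zero (zprod_ne j) (zvar_add_ne j)
    rw [show P * (zvar + (j : RatFunc2)) - Q * (tvar + (j : RatFunc2))
        = (P - Q) * (zvar + (j : RatFunc2)) + Q * (zvar - tvar) by ring]
    rw [add_div, mul_div_right_comm, mul_div_cancel_right₀ Q zvar_sub_tvar_ne, ih,
      mul_add (P * (zvar + (j : RatFunc2))), mul_div_cancel₀ Q hPz]
    ring
end

section
/- Let n ≥ 1 be an integer and α ∈ ℚ a rational number. Define μ_n(α) = den(α)^n · Π_{q prime, q | den(α)} q^{⌊n/(q-1)⌋}, where den(α) is the denominator of α. Then for every k with 0 ≤ k ≤ n, both μ_n(α)·(α)_k/k! and μ_n(α)·binom(α,k) are integers. -/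
open Finset

/-- `μ_n(α) = den(α)^n · Π_{q prime, q ∣ den(α)} q^{⌊n/(q-1)⌋}`. -/
def mun (n : ℕ) (α : ℚ) : ℕ :=
  α.den ^ n * ∏ q ∈ α.den.primeFactors, q ^ (n / (q - 1))

lemma prod_range_add_eq_ascFactorial (c k : ℕ) :
    ∏ i ∈ range k, (c + i) = c.ascFactorial k := by
  induction k with
  | zero => simp
  | succ k ih => rw [prod_range_succ, ih, Nat.ascFactorial_succ, mul_comm]

lemma zmod_step (k : ℕ) (m : ℤ) (d : ℕ) (p : ℕ) (hp : p.Prime) (hpd : ¬ p ∣ d) (v : ℕ)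
    (hv : p ^ v ∣ k.factorial) :
    ((p : ℤ)) ^ v ∣ ∏ i ∈ range k, (m + (i : ℤ) * (d : ℤ)) := by
  rcases Nat.eq_zero_or_pos v with rfl | hvpos
  · simp
  haveI : NeZero (p ^ v) := ⟨pow_ne_zero _ hp.ne_zero⟩
  have hcop : Nat.Coprime d (p ^ v) :=
    (Nat.Coprime.pow_right v (Nat.coprime_comm.mp (hp.coprime_iff_not_dvd.mpr hpd)))
  obtain ⟨u, hu⟩ := (ZMod.isUnit_iff_coprime d (p ^ v)).mpr hcop
  set w : ZMod (p ^ v) := ((u⁻¹ : (ZMod (p ^ v))ˣ) : ZMod (p ^ v)) with hw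
  have hwd : w * (d : ZMod (p ^ v)) = 1 := by
    rw [hw, ← hu, ← Units.val_mul, inv_mul_cancel, Units.val_one]
  set c : ℕ := (w * (m : ZMod (p ^ v))).val with hc
  have hcast : ((c : ℕ) : ZMod (p ^ v)) = w * (m : ZMod (p ^ v)) := by
    rw [hc, ZMod.natCast_val, ZMod.cast_id]
  have h1 : p ^ v ∣ ∏ i ∈ range k, (c + i) := by
    rw [prod_range_add_eq_ascFactorial]
    exact hv.trans (Nat.factorial_dvd_ascFactorial c k)
  have h2 : ((∏ i ∈ range k, (c + i) : ℕ) : ZMod (p ^ v)) = 0 :=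
    (ZMod.natCast_eq_zero_iff _ _).mpr h1
  have h3 : w ^ k * ((∏ i ∈ range k, (m + (i : ℤ) * (d : ℤ)) : ℤ) : ZMod (p ^ v)) = 0 := by
    push_cast at h2 ⊢
    have hpow : w ^ k = ∏ _i ∈ range k, w := by rw [Finset.prod_const, card_range]
    rw [hpow, ← Finset.prod_mul_distrib, ← h2]
    refine Finset.prod_congr rfl fun i _ => ?_
    rw [hcast]
    have : w * ((m : ZMod (p ^ v)) + (i : ZMod (p ^ v)) * (d : ZMod (p ^ v)))
        = w * (m : ZMod (p ^ v)) + (i : ZMod (p ^ v)) * (w * (d : ZMod (p ^ v))) := by ring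
    rw [this, hwd, mul_one]
  have hwu : IsUnit (w ^ k) := (u⁻¹.isUnit).pow k
  have h4 : ((∏ i ∈ range k, (m + (i : ℤ) * (d : ℤ)) : ℤ) : ZMod (p ^ v)) = 0 := by
    have := hwu.mul_right_eq_zero.mp h3
    exact this
  have := (ZMod.intCast_zmod_eq_zero_iff_dvd _ _).mp h4
  push_cast at this
  exact this

lemma core (n k : ℕ) (hk : k ≤ n) (α : ℚ) :
    ((k.factorial * α.den ^ k : ℕ) : ℤ) ∣
      (mun n α : ℤ) * ∏ i ∈ range k, (α.num + (i : ℤ) * (α.den : ℤ)) := by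
  set d := α.den with hd
  set m := α.num with hm
  set P : ℤ := ∏ i ∈ range k, (m + (i : ℤ) * (d : ℤ)) with hP
  rcases eq_or_ne P 0 with h0 | hP0
  · rw [h0, mul_zero]; exact dvd_zero _
  have hd0 : d ≠ 0 := α.den_ne_zero
  set Q : ℕ := ∏ q ∈ d.primeFactors, q ^ (n / (q - 1)) with hQ
  have hQ0 : Q ≠ 0 :=
    Finset.prod_ne_zero_iff.mpr fun q hq =>
      pow_ne_zero _ (Nat.Prime.ne_zero (Nat.prime_of_mem_primeFactors hq))
  have hmun : mun n α = d ^ n * Q := rfl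
  rw [← Int.natAbs_dvd_natAbs, Int.natAbs_mul, Int.natAbs_natCast, Int.natAbs_natCast]
  have hmun0 : mun n α ≠ 0 := by
    rw [hmun]; exact mul_ne_zero (pow_ne_zero _ hd0) hQ0
  have hPA0 : P.natAbs ≠ 0 := Int.natAbs_ne_zero.mpr hP0
  rw [← Nat.factorization_le_iff_dvd
        (mul_ne_zero k.factorial_ne_zero (pow_ne_zero _ hd0))
        (mul_ne_zero hmun0 hPA0)]
  intro p
  by_cases hp : p.Prime
  · have hlhs : (k.factorial * d ^ k).factorization p
        = k.factorial.factorization p + k * d.factorization p := by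
      rw [Nat.factorization_mul k.factorial_ne_zero (pow_ne_zero _ hd0),
        Nat.factorization_pow]
      simp
    have hrhs : (mun n α * P.natAbs).factorization p
        = n * d.factorization p + Q.factorization p + P.natAbs.factorization p := by
      rw [Nat.factorization_mul hmun0 hPA0, hmun,
        Nat.factorization_mul (pow_ne_zero _ hd0) hQ0, Nat.factorization_pow]
      simp [add_assoc]
    rw [hlhs, hrhs]
    have hfacbd : k.factorial.factorization p ≤ k / (p - 1) := by
      have h1 : p ^ (k.factorial.factorization p) ∣ k.factorial := Nat.ordProj_dvd _ p
      have h2 := (Nat.Prime.pow_dvd_factorial_iff hp (Nat.lt_succ_self (Nat.log p k))).mp h1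
      exact h2.trans (Nat.geom_sum_Ico_le hp.two_le _ _)
    by_cases hpd : p ∣ d
    · have hQbd : n / (p - 1) ≤ Q.factorization p := by
        have hmem : p ∈ d.primeFactors := Nat.mem_primeFactors.mpr ⟨hp, hpd, hd0⟩
        have : p ^ (n / (p - 1)) ∣ Q :=
          Finset.dvd_prod_of_mem (fun q => q ^ (n / (q - 1))) hmem
        exact (Nat.Prime.pow_dvd_iff_le_factorization hp hQ0).mp this
      have h1 : k.factorial.factorization p ≤ Q.factorization p :=
        (hfacbd.trans (Nat.div_le_div_right hk)).trans hQbd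
      have h2 : k * d.factorization p ≤ n * d.factorization p :=
        Nat.mul_le_mul_right _ hk
      omega
    · have hdz : d.factorization p = 0 := Nat.factorization_eq_zero_of_not_dvd hpd
      have hPbd : k.factorial.factorization p ≤ P.natAbs.factorization p := by
        have hdvd : (p : ℤ) ^ (k.factorial.factorization p) ∣ P :=
          zmod_step k m d p hp hpd _ (Nat.ordProj_dvd _ p)
        have : p ^ (k.factorial.factorization p) ∣ P.natAbs := by
          rw [← Int.natCast_dvd] at *
          · exact_mod_cast hdvd
        exact (Nat.Prime.pow_dvd_iff_le_factorization hp hPA0).mp this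
      rw [hdz]
      omega
  · simp [Nat.factorization_eq_zero_of_not_prime _ hp]

lemma mun_helper (n : ℕ) (α : ℚ) (k : ℕ) (hk : k ≤ n) :
    ∃ a : ℤ, (mun n α : ℚ) * ((∏ i ∈ range k, (α + i)) / (k.factorial : ℚ)) = a := by
  obtain ⟨a, ha⟩ := core n k hk α
  use a
  have hd : ((α.den : ℚ)) ≠ 0 := by
    exact_mod_cast α.den_ne_zero
  have hprod : ∏ i ∈ range k, (α + (i : ℚ))
      = ((∏ i ∈ range k, (α.num + (i : ℤ) * (α.den : ℤ)) : ℤ) : ℚ) / (α.den : ℚ) ^ k := by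
    have hterm : ∀ i ∈ range k, α + (i : ℚ) = ((α.num : ℚ) + (i : ℚ) * α.den) / α.den := by
      intro i _
      rw [eq_div_iff hd, add_mul, Rat.mul_den_eq_num]
    rw [Finset.prod_congr rfl hterm, Finset.prod_div_distrib, Finset.prod_const, card_range]
    push_cast
    ring
  have key : (mun n α : ℚ) * ((∏ i ∈ range k, (α.num + (i : ℤ) * (α.den : ℤ)) : ℤ) : ℚ)
      = (k.factorial : ℚ) * (α.den : ℚ) ^ k * a := by
    exact_mod_cast congrArg (fun z : ℤ => (z : ℚ)) ha
  rw [hprod]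
  have hf : ((k.factorial : ℚ)) ≠ 0 := by exact_mod_cast k.factorial_ne_zero
  push_cast at key
  field_simp
  push_cast
  linear_combination key

/-- For `n ≥ 1`, `α ∈ ℚ`, and `0 ≤ k ≤ n`, both `μ_n(α)·(α)_k/k!` and
`μ_n(α)·binom(α,k)` are integers. -/
theorem mun_mul_pochhammer_int (n : ℕ) (hn : 1 ≤ n) (α : ℚ) (k : ℕ) (hk : k ≤ n) :
    (∃ a : ℤ, (mun n α : ℚ) * ((∏ i ∈ range k, (α + i)) / (k.factorial : ℚ)) = a) ∧
    (∃ b : ℤ, (mun n α : ℚ) * ((∏ i ∈ range k, (α - i)) / (k.factorial : ℚ)) = b) := by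
  refine ⟨mun_helper n α k hk, ?_⟩
  obtain ⟨b, hb⟩ := mun_helper n (-α) k hk
  use (-1) ^ k * b
  have hmun : mun n (-α) = mun n α := by
    unfold mun
    rw [Rat.den_neg_eq_den]
  have hneg : ∏ i ∈ range k, (α - (i : ℚ)) = (-1) ^ k * ∏ i ∈ range k, (-α + (i : ℚ)) := by
    have : ∀ i ∈ range k, α - (i : ℚ) = (-1) * (-α + (i : ℚ)) := fun i _ => by ring
    rw [Finset.prod_congr rfl this, Finset.prod_mul_distrib, Finset.prod_const, card_range]
  rw [hneg]
  rw [hmun] at hb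
  push_cast
  calc (mun n α : ℚ) * (((-1) ^ k * ∏ i ∈ range k, (-α + (i : ℚ))) / (k.factorial : ℚ))
      = (-1) ^ k * ((mun n α : ℚ) * ((∏ i ∈ range k, (-α + (i : ℚ))) / (k.factorial : ℚ))) := by
        ring
    _ = (-1) ^ k * (b : ℚ) := by rw [hb]
end

section
/- Let K be a field of characteristic 0. For the formal Laurent series R_s(z) = Σ_{k≥s-2} (k−s+3)_{s-2} B_{k−s+2} (−1)^{k+1}/z^{k+1} ∈ (1/z)K[[1/z]] (where B_j is the j-th Bernoulli number and (a)_j is the Pochhammer symbol, s ≥ 2 an integer), the forward difference satisfies Δ₁(R_s)(z) := R_s(z+1) − R_s(z) = (−1)^s (s−1)!/z^s, as an identity of formal Laurent series in 1/z. -/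
open Finset

/-- The Laurent series `R_s(z) = Σ_{k≥s-2} (k-s+3)_{s-2} B_{k-s+2} (-1)^{k+1}/z^{k+1}`,
modeled as a power series in `X = 1/z` (the coefficient of `X^m`, `m = k+1`, is
`(-1)^m (m+2-s)_{s-2} B_{m+1-s}`). -/
noncomputable def Rser (K : Type*) [Field K] [CharZero K] (s : ℕ) : PowerSeries K :=
  PowerSeries.mk fun m =>
    if s - 1 ≤ m then
      (-1 : K) ^ m * (∏ i ∈ range (s - 2), ((m + 2 - s + i : ℕ) : K)) *
        algebraMap ℚ K (bernoulli (m + 1 - s))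
    else 0

/-- The substitution `z ↦ z + 1` on formal Laurent series in `1/z` supported in
`K[[1/z]]`, i.e. `X = 1/z ↦ 1/(z+1) = X(1+X)^{-1}`, computed by expanding each
`X^n(1+X)^{-n} = Σ_j (-1)^j C(n+j-1, j) X^{n+j}`. -/
noncomputable def shiftOne {K : Type*} [Field K] (f : PowerSeries K) : PowerSeries K :=
  PowerSeries.mk fun m =>
    ∑ n ∈ range (m + 1),
      (PowerSeries.coeff n f) * (-1 : K) ^ (m - n) * ((m - 1).choose (m - n) : K)

private lemma fact_mul_prod (j t : ℕ) :
    j.factorial * ∏ i ∈ range t, (j + 1 + i) = (j + t).factorial := by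
  induction t with
  | zero => simp
  | succ t ih =>
    rw [prod_range_succ, ← mul_assoc, ih, show j + 1 + t = (j + t) + 1 by omega,
      show j + (t + 1) = (j + t) + 1 by omega, Nat.factorial_succ, mul_comm]

private lemma key_nat (s m j : ℕ) (hs : 2 ≤ s) (hm : s ≤ m) (hj : j ≤ m - (s - 1)) :
    (∏ i ∈ range (s - 2), (j + 1 + i)) * Nat.choose (m - 1) (m - (s - 1) - j)
      * Nat.factorial (m - (s - 1)) = Nat.factorial (m - 1) * Nat.choose (m - (s - 1)) j := by
  set N := m - (s - 1) with hN
  set t := s - 2 with ht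
  have h1 : j.factorial * ∏ i ∈ range t, (j + 1 + i) = (j + t).factorial := fact_mul_prod j t
  have h2 : Nat.choose (m - 1) (N - j) * (N - j).factorial * (m - 1 - (N - j)).factorial
      = (m - 1).factorial := Nat.choose_mul_factorial_mul_factorial (by omega)
  have h3 : Nat.choose N j * j.factorial * (N - j).factorial = N.factorial :=
    Nat.choose_mul_factorial_mul_factorial hj
  have he : m - 1 - (N - j) = j + t := by omega
  rw [he] at h2
  apply Nat.eq_of_mul_eq_mul_right
    (Nat.mul_pos j.factorial_pos (N - j).factorial_pos)
  calc (∏ i ∈ range t, (j + 1 + i)) * Nat.choose (m - 1) (N - j) * N.factorial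
        * (j.factorial * (N - j).factorial)
      = ((j.factorial * ∏ i ∈ range t, (j + 1 + i)) * Nat.choose (m - 1) (N - j)
          * (N - j).factorial) * N.factorial := by ring
    _ = (m - 1).factorial * N.factorial := by rw [h1, ← h2]; ring
    _ = (m - 1).factorial * (Nat.choose N j * j.factorial * (N - j).factorial) := by rw [h3]
    _ = _ := by ring

/-- For `s ≥ 2`, the forward difference of `R_s` satisfies
`R_s(z+1) - R_s(z) = (-1)^s (s-1)! / z^s` as formal Laurent series in `1/z`. -/
theorem bdiff_Rser {K : Type*} [Field K] [CharZero K] (s : ℕ) (hs : 2 ≤ s) :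
    shiftOne (Rser K s) - Rser K s =
      PowerSeries.C ((-1 : K) ^ s * ((s - 1).factorial : K)) * PowerSeries.X ^ s := by
  apply PowerSeries.ext
  intro m
  rw [map_sub, PowerSeries.coeff_C_mul, PowerSeries.coeff_X_pow]
  simp only [shiftOne, PowerSeries.coeff_mk]
  rw [Finset.sum_range_succ]
  simp only [Nat.sub_self, pow_zero, Nat.choose_zero_right, Nat.cast_one, mul_one]
  rw [add_sub_cancel_right]
  set c : ℕ → K := fun n => PowerSeries.coeff n (Rser K s) with hc
  have hcval : ∀ n, c n = if s - 1 ≤ n then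
      (-1 : K) ^ n * (∏ i ∈ range (s - 2), ((n + 2 - s + i : ℕ) : K)) *
        algebraMap ℚ K (bernoulli (n + 1 - s)) else 0 := by
    intro n; simp [hc, Rser]
  by_cases hm : s ≤ m
  swap
  · rw [if_neg (by omega)]
    rw [Finset.sum_eq_zero, mul_zero]
    intro n hn
    rw [mem_range] at hn
    simp only [Rser, PowerSeries.coeff_mk]
    rw [if_neg (by omega), zero_mul, zero_mul]
  · set N := m - (s - 1) with hN
    have hsum : ∑ n ∈ range m, c n * (-1 : K) ^ (m - n) * ((m - 1).choose (m - n) : K)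
        = ∑ n ∈ Ico (s - 1) m, c n * (-1 : K) ^ (m - n) * ((m - 1).choose (m - n) : K) := by
      refine (Finset.sum_subset ?_ ?_).symm
      · intro x hx; rw [mem_Ico] at hx; rw [mem_range]; exact hx.2
      · intro x hx hx'
        rw [mem_range] at hx; rw [mem_Ico, not_and_or, not_le, not_lt] at hx'
        rcases hx' with h | h
        · rw [hcval, if_neg (by omega), zero_mul, zero_mul]
        · omega
    rw [hsum, Finset.sum_Ico_eq_sum_range]
    have hN0 : (N.factorial : K) ≠ 0 := Nat.cast_ne_zero.2 N.factorial_pos.ne'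
    have hterm : ∀ j ∈ range (m - (s - 1)),
        c (s - 1 + j) * (-1 : K) ^ (m - (s - 1 + j)) * ((m - 1).choose (m - (s - 1 + j)) : K)
        = (-1 : K) ^ m * (((m - 1).factorial : K) / (N.factorial : K))
            * ((N.choose j : K) * algebraMap ℚ K (bernoulli j)) := by
      intro j hj
      rw [mem_range] at hj
      rw [hcval, if_pos (show s - 1 ≤ s - 1 + j by omega)]
      have e1 : ∏ i ∈ range (s - 2), ((s - 1 + j + 2 - s + i : ℕ) : K)
          = ∏ i ∈ range (s - 2), ((j + 1 + i : ℕ) : K) :=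
        Finset.prod_congr rfl fun i _ => by congr 1; omega
      have e2 : s - 1 + j + 1 - s = j := by omega
      have e3 : m - (s - 1 + j) = N - j := by omega
      rw [e1, e2, e3]
      have hkeyK : (∏ i ∈ range (s - 2), ((j + 1 + i : ℕ) : K)) * ((m - 1).choose (N - j) : K)
          * (N.factorial : K) = ((m - 1).factorial : K) * (N.choose j : K) := by
        have := key_nat s m j hs hm (le_of_lt hj)
        exact_mod_cast congrArg (Nat.cast : ℕ → K) this
      have hP : (∏ i ∈ range (s - 2), ((j + 1 + i : ℕ) : K)) * ((m - 1).choose (N - j) : K)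
          = ((m - 1).factorial : K) / (N.factorial : K) * (N.choose j : K) := by
        rw [div_mul_eq_mul_div, eq_div_iff hN0]; linear_combination hkeyK
      have hsign : (-1 : K) ^ (s - 1 + j) * (-1 : K) ^ (N - j) = (-1 : K) ^ m := by
        rw [← pow_add, show s - 1 + j + (N - j) = m by omega]
      calc (-1 : K) ^ (s - 1 + j) * (∏ i ∈ range (s - 2), ((j + 1 + i : ℕ) : K)) *
              algebraMap ℚ K (bernoulli j) * (-1 : K) ^ (N - j) * ((m - 1).choose (N - j) : K)
          = ((-1 : K) ^ (s - 1 + j) * (-1 : K) ^ (N - j)) *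
              ((∏ i ∈ range (s - 2), ((j + 1 + i : ℕ) : K)) * ((m - 1).choose (N - j) : K)) *
              algebraMap ℚ K (bernoulli j) := by ring
        _ = _ := by rw [hsign, hP]; ring
    rw [Finset.sum_congr rfl hterm, ← Finset.mul_sum]
    have hber : ∑ j ∈ range (m - (s - 1)), (N.choose j : K) * algebraMap ℚ K (bernoulli j)
        = if N = 1 then 1 else 0 := by
      have h2 := congrArg (algebraMap ℚ K) (sum_bernoulli N)
      rw [map_sum] at h2
      simp only [map_mul, map_natCast] at h2
      rw [show m - (s - 1) = N from rfl, h2]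
      split <;> simp
    rw [hber]
    by_cases hms : m = s
    · have h1 : N = 1 := by omega
      rw [if_pos h1, if_pos hms, hms, h1]
      norm_num
    · rw [if_neg (show ¬N = 1 by omega), if_neg hms, mul_zero, mul_zero]
end

section
/- Let K be a field of characteristic 0. For f(z) = Σ_{k≥0} f_k/z^{k+1} ∈ (1/z)K[[1/z]] define the K-linear form φ_f : K[t] → K by φ_f(t^k) = f_k. Suppose f(z) = Σ_{k≥0} a_k·k!/((z)(z+1)⋯(z+k)) (expanded as a Laurent series in 1/z). Then for every j ≥ 0, φ_f((t)_j/j!) = a_j, where (t)_j = t(t+1)⋯(t+j-1). -/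
open Polynomial Finset fwdDiff

section Aux
variable {K : Type*} [Field K] [CharZero K]

omit [CharZero K] in
lemma step_diff (m : ℕ) : fwdDiff (1:ℕ) (fun x : ℕ => (x:K)^m)
    = fun x : ℕ => ∑ r ∈ range m, (m.choose r : K) * (x:K)^r := by
  ext x
  have : ((x + 1 : ℕ) : K) = (x : K) + 1 := by push_cast; ring
  rw [fwdDiff, this, add_pow, Finset.sum_range_succ]
  simp [mul_comm]

lemma vanish_diff : ∀ m k : ℕ, m < k → (fwdDiff (1:ℕ))^[k] (fun x : ℕ => (x:K)^m) = 0 := by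
  intro m
  induction m using Nat.strong_induction_on with
  | _ m IH =>
    intro k hk
    obtain ⟨k, rfl⟩ : ∃ k', k = k' + 1 := ⟨k - 1, by omega⟩
    rw [Function.iterate_succ_apply, step_diff]
    have : (fun x : ℕ => ∑ r ∈ range m, (m.choose r : K) * (x:K)^r)
        = ∑ r ∈ range m, (m.choose r : K) • (fun x : ℕ => (x:K)^r) := by
      ext x; simp
    rw [this, fwdDiff_iter_finset_sum]
    apply Finset.sum_eq_zero
    intro r hr
    have hrm := mem_range.mp hr
    rw [fwdDiff_iter_const_smul, IH r hrm k (by omega)]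
    simp

lemma key_vanish (k m : ℕ) (hmk : m < k) :
    ∑ i ∈ range (k+1), (-1:K)^i * (k.choose i : K) * (i:K)^m = 0 := by
  have h0 := fwdDiff_iter_eq_sum_shift (1:ℕ) (fun x : ℕ => (x:K)^m) k 0
  rw [vanish_diff m k hmk] at h0
  simp only [Pi.zero_apply, zero_add, smul_eq_mul, zsmul_eq_mul, Int.cast_mul,
    Int.cast_pow, Int.cast_neg, Int.cast_one, Int.cast_natCast, smul_eq_mul, mul_one] at h0
  have h1 : (0:K) = ∑ i ∈ range (k+1), (-1:K)^(k-i) * (k.choose i : K) * (i:K)^m := by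
    rw [h0]
  have h2 : ∀ i ∈ range (k+1), (-1:K)^i * (k.choose i : K) * (i:K)^m
      = (-1:K)^k * ((-1:K)^(k-i) * (k.choose i : K) * (i:K)^m) := by
    intro i hi
    have hik := mem_range.mp hi
    have e : (-1:K)^k * (-1:K)^(k-i) = (-1:K)^i := by
      rw [← pow_add]
      have : k + (k - i) = i + 2*(k-i) := by omega
      rw [this, pow_add, pow_mul]; simp
    rw [← e]; ring
  rw [Finset.sum_congr rfl h2, ← Finset.mul_sum, ← h1, mul_zero]

end Aux

/-- Let `K` be a field of characteristic `0`.  Encode `f(z) = Σ_{m≥0} f_m/z^{m+1}` by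
its coefficient function `fc : ℕ → K`, and let `φ_f : K[t] → K` be the linear form
with `φ_f(t^m) = f_m`, i.e. `φ_f(P) = Σ_m (coeff of t^m in P) · f_m`.  Suppose
`f(z) = Σ_{k≥0} a_k·k!/(z(z+1)⋯(z+k))`, which coefficientwise means
`f_m = Σ_{k≤m} a_k · Σ_{i=0}^k (-1)^i C(k,i) (-i)^m` (using the expansion
`k!/(z(z+1)⋯(z+k)) = Σ_{i=0}^k (-1)^i C(k,i)/(z+i)` and `1/(z+i) = Σ_m (-i)^m/z^{m+1}`).
Then for every `j ≥ 0`, `φ_f((t)_j/j!) = a_j`. -/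
theorem phi_f_pochhammer {K : Type*} [Field K] [CharZero K] (fc a : ℕ → K)
    (h : ∀ m : ℕ, fc m =
        ∑ k ∈ range (m + 1), a k *
          ∑ i ∈ range (k + 1), (-1 : K) ^ i * (k.choose i : K) * (-(i : K)) ^ m) :
    ∀ j : ℕ,
      ((∏ i ∈ range j, (X + C (i : K))) * C ((j.factorial : K))⁻¹).sum
          (fun m c => c * fc m) = a j := by
  intro j
  set P : K[X] := (∏ i ∈ range j, (X + C (i : K))) * C ((j.factorial : K))⁻¹ with hP
  have hPdeg : P.natDegree < j + 1 := by
    apply Nat.lt_succ_of_le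
    refine (natDegree_mul_le).trans ?_
    have h1 : (∏ i ∈ range j, (X + C (i : K))).natDegree ≤ j := by
      refine (natDegree_prod_le _ _).trans ?_
      refine (Finset.sum_le_card_nsmul _ _ 1 ?_).trans (by simp)
      intro i _
      exact (natDegree_X_add_C _).le
    simpa using h1
  -- evaluation facts
  have hevalP : ∀ i : ℕ, i < j → P.eval (-(i : K)) = 0 := by
    intro i hi
    rw [hP, eval_mul, eval_prod]
    rw [Finset.prod_eq_zero (mem_range.mpr hi) (by simp)]
    simp
  have hevalPj : P.eval (-(j : K)) = (-1 : K) ^ j := by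
    rw [hP, eval_mul, eval_prod, eval_C]
    have : ∀ i ∈ range j, eval (-(j:K)) (X + C (i:K)) = (-1 : K) * ((j - i : ℕ) : K) := by
      intro i hi
      have hij := mem_range.mp hi
      rw [eval_add, eval_X, eval_C, Nat.cast_sub hij.le]
      ring
    rw [Finset.prod_congr rfl this, Finset.prod_mul_distrib, Finset.prod_const]
    have : ∏ i ∈ range j, ((j - i : ℕ) : K) = (j.factorial : K) := by
      rw [← Nat.cast_prod]
      congr 1
      rw [← Finset.prod_range_reflect]
      rw [← Finset.prod_range_add_one_eq_factorial]
      apply Finset.prod_congr rfl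
      intro i hi
      have := mem_range.mp hi
      omega
    rw [this, mul_assoc, mul_inv_cancel₀ (by exact_mod_cast j.factorial_ne_zero)]
    simp
  rw [Polynomial.sum_over_range' P (f := fun m c => c * fc m) (fun n => zero_mul _) (j + 1) hPdeg]
  -- expand fc and extend inner sum over k to range (j+1)
  have hstep : ∀ m ∈ range (j + 1), P.coeff m * fc m =
      ∑ k ∈ range (j + 1), ∑ i ∈ range (k + 1),
        a k * ((-1 : K) ^ i * (k.choose i : K) * (P.coeff m * (-(i : K)) ^ m)) := by
    intro m hm
    have hmj := mem_range.mp hm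
    rw [h m, Finset.mul_sum]
    rw [Finset.sum_subset (Finset.range_subset_range.mpr (by omega : m + 1 ≤ j + 1))]
    · apply Finset.sum_congr rfl
      intro k _
      rw [Finset.mul_sum, Finset.mul_sum]
      apply Finset.sum_congr rfl
      intro i _
      ring
    · intro k hk hknot
      have hmk : m < k := by
        have := mem_range.mp hk
        simp only [mem_range, not_lt] at hknot
        omega
      have hz : ∑ i ∈ range (k + 1), (-1 : K) ^ i * (k.choose i : K) * (-(i : K)) ^ m = 0 := by
        have : ∀ i ∈ range (k+1), (-1 : K) ^ i * (k.choose i : K) * (-(i : K)) ^ m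
            = (-1:K)^m * ((-1 : K) ^ i * (k.choose i : K) * (i : K) ^ m) := by
          intro i _
          rw [neg_pow]
          ring
        rw [Finset.sum_congr rfl this, ← Finset.mul_sum, key_vanish k m hmk, mul_zero]
      rw [hz, mul_zero, mul_zero]
  rw [Finset.sum_congr rfl hstep, Finset.sum_comm]
  -- now inner: for each k, sum over m gives eval
  have hinner : ∀ k ∈ range (j + 1),
      ∑ m ∈ range (j + 1), ∑ i ∈ range (k + 1),
        a k * ((-1 : K) ^ i * (k.choose i : K) * (P.coeff m * (-(i : K)) ^ m)) =
      a k * ∑ i ∈ range (k + 1), (-1 : K) ^ i * (k.choose i : K) * P.eval (-(i : K)) := by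
    intro k _
    rw [Finset.sum_comm, Finset.mul_sum]
    apply Finset.sum_congr rfl
    intro i _
    rw [eval_eq_sum_range' hPdeg]
    rw [Finset.mul_sum, Finset.mul_sum]
  rw [Finset.sum_congr rfl hinner]
  -- kill all k < j, and all i < j in k = j term
  rw [Finset.sum_range_succ]
  have hzero : ∀ k ∈ range j, a k * ∑ i ∈ range (k + 1),
      (-1 : K) ^ i * (k.choose i : K) * P.eval (-(i : K)) = 0 := by
    intro k hk
    have hkj := mem_range.mp hk
    have : ∑ i ∈ range (k + 1), (-1 : K) ^ i * (k.choose i : K) * P.eval (-(i : K)) = 0 := by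
      apply Finset.sum_eq_zero
      intro i hi
      rw [hevalP i (by have := mem_range.mp hi; omega), mul_zero]
    rw [this, mul_zero]
  rw [Finset.sum_eq_zero hzero, zero_add]
  rw [Finset.sum_range_succ]
  have hzero2 : ∀ i ∈ range j, (-1 : K) ^ i * (j.choose i : K) * P.eval (-(i : K)) = 0 := by
    intro i hi
    rw [hevalP i (mem_range.mp hi), mul_zero]
  rw [Finset.sum_eq_zero hzero2, zero_add, hevalPj, Nat.choose_self]
  have : (-1 : K) ^ j * (-1 : K) ^ j = 1 := by
    rw [← pow_add, ← two_mul, pow_mul]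
    norm_num
  rw [Nat.cast_one]
  calc a j * ((-1:K)^j * 1 * (-1:K)^j) = a j * ((-1:K)^j * (-1:K)^j) := by ring
    _ = a j := by rw [this, mul_one]
end

section
/- Let K be a field of characteristic 0, m ≥ 0 an integer, N ≥ 0, and r_0 ≥ r_1 ≥ ⋯ ≥ r_N ≥ 0 integers with r_0 ≤ m+1. Set B(t) = Π_{i=0}^N (t+i)^{r_i}. Let Δ(P)(t) = P(t−1) − P(t). If Q(t), R(t) ∈ K[t] satisfy Q(t)·B(t) = Δ(t^{m+1}·R(t)), then B(t+1) divides R(t). Consequently, B(t)·K[t] ∩ Δ(t^{m+1}·K[t]) = Δ(t^{m+1}·B(t+1)·K[t]). -/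
open Polynomial Finset

section Aux
variable {K : Type*} [Field K] [CharZero K]

lemma comp_dvd' {p q c : Polynomial K} (h : p ∣ q) : p.comp c ∣ q.comp c := by
  obtain ⟨d, rfl⟩ := h; exact ⟨d.comp c, by rw [mul_comp]⟩

lemma comp_sub_add' (P : Polynomial K) : (P.comp (X - 1)).comp (X + 1) = P := by
  rw [comp_assoc]
  simp [sub_comp]

lemma comp_add_sub' (P : Polynomial K) : (P.comp (X + 1)).comp (X - 1) = P := by
  rw [comp_assoc]
  simp [add_comp]

lemma coprime_linear' {a b : K} (h : a ≠ b) :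
    IsCoprime ((X : Polynomial K) + C a) (X + C b) := by
  have h1 : (X : Polynomial K) + C a = X - C (-a) := by simp
  have h2 : (X : Polynomial K) + C b = X - C (-b) := by simp
  rw [h1, h2]
  refine isCoprime_X_sub_C_of_isUnit_sub (isUnit_iff_ne_zero.mpr ?_)
  rw [show -a - -b = b - a by ring, sub_ne_zero]
  exact h.symm

lemma lin_comp' (a : K) : ((X : Polynomial K) + C a).comp (X + 1) = X + C (a + 1) := by
  simp [add_comp, C_add]; ring

end Aux

/-- Let `K` be a field of characteristic `0`, `m, N ≥ 0`, and
`m+1 ≥ r_0 ≥ r_1 ≥ ⋯ ≥ r_N ≥ 0`.  Set `B(t) = Π_{i=0}^N (t+i)^{r_i}`.  If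
`Q·B = Δ(t^{m+1}·R)` then `B(t+1) ∣ R`; consequently
`B·K[t] ∩ Δ(t^{m+1}·K[t]) = Δ(t^{m+1}·B(t+1)·K[t])`. -/
theorem bfactor_divides_and_inter {K : Type*} [Field K] [CharZero K] (m N : ℕ)
    (r : ℕ → ℕ) (hmono : ∀ i j, i ≤ j → j ≤ N → r j ≤ r i) (hr0 : r 0 ≤ m + 1) :
    (∀ Q R : Polynomial K,
        Q * (∏ i ∈ range (N + 1), (X + C (i : K)) ^ (r i)) =
            bdiff ((X : Polynomial K) ^ (m + 1) * R) →
        ((∏ i ∈ range (N + 1), (X + C (i : K)) ^ (r i)).comp (X + 1)) ∣ R) ∧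
    ((Ideal.span {∏ i ∈ range (N + 1), (X + C (i : K)) ^ (r i)} : Set (Polynomial K)) ∩
        bdiff '' (Ideal.span {(X : Polynomial K) ^ (m + 1)} : Set (Polynomial K)) =
      bdiff '' (Ideal.span
        {(X : Polynomial K) ^ (m + 1) *
          (∏ i ∈ range (N + 1), (X + C (i : K)) ^ (r i)).comp (X + 1)} : Set (Polynomial K))) := by
  set B : Polynomial K := ∏ i ∈ range (N + 1), (X + C (i : K)) ^ (r i) with hB
  have hfac : ∀ i, i ≤ N → ((X : Polynomial K) + C (i : K)) ^ (r i) ∣ B := fun i hi =>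
    Finset.dvd_prod_of_mem _ (mem_range.mpr (Nat.lt_succ_of_le hi))
  have hBcomp : B.comp (X + 1) = ∏ i ∈ range (N + 1),
      ((X : Polynomial K) + C ((i : K) + 1)) ^ (r i) := by
    rw [hB, Polynomial.prod_comp]
    exact Finset.prod_congr rfl fun i _ => by rw [pow_comp, lin_comp']
  -- Part 1
  have part1 : ∀ Q R : Polynomial K,
      Q * B = bdiff ((X : Polynomial K) ^ (m + 1) * R) → B.comp (X + 1) ∣ R := by
    intro Q R h
    have hshift : ∀ (a : K) (n : ℕ), (X + C a) ^ n ∣ (X : Polynomial K) ^ (m + 1) * R →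
        (X + C a) ^ n ∣ Q * B → (X + C (a + 1)) ^ n ∣ (X : Polynomial K) ^ (m + 1) * R := by
      intro a n h1 h2
      have h3 : (X + C a) ^ n ∣ ((X : Polynomial K) ^ (m + 1) * R).comp (X - 1) := by
        have he : ((X : Polynomial K) ^ (m + 1) * R).comp (X - 1)
            = Q * B + (X : Polynomial K) ^ (m + 1) * R := by
          rw [h]; simp only [bdiff]; ring
        rw [he]; exact dvd_add h2 h1
      have h4 := comp_dvd' (c := X + 1) h3
      rwa [comp_sub_add', pow_comp, lin_comp'] at h4
    have key : ∀ i, i ≤ N →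
        ((X : Polynomial K) + C ((i : K) + 1)) ^ (r i) ∣ (X : Polynomial K) ^ (m + 1) * R := by
      intro i
      induction i with
      | zero =>
        intro _
        have h1 : ((X : Polynomial K) + C ((0 : ℕ) : K)) ^ (r 0) ∣
            (X : Polynomial K) ^ (m + 1) * R := by
          simp only [Nat.cast_zero, C_0, add_zero]
          exact dvd_mul_of_dvd_left (pow_dvd_pow X hr0) R
        have h2 : ((X : Polynomial K) + C ((0 : ℕ) : K)) ^ (r 0) ∣ Q * B :=
          (hfac 0 (Nat.zero_le N)).trans (dvd_mul_left B Q)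
        simpa using hshift _ _ h1 h2
      | succ i ih =>
        intro hsucc
        have hiN : i ≤ N := le_trans (Nat.le_succ i) hsucc
        have h1 : ((X : Polynomial K) + C (((i + 1 : ℕ)) : K)) ^ (r (i + 1)) ∣
            (X : Polynomial K) ^ (m + 1) * R := by
          have := (pow_dvd_pow _ (hmono i (i + 1) (Nat.le_succ i) hsucc)).trans (ih hiN)
          push_cast at this ⊢
          exact this
        have h2 : ((X : Polynomial K) + C (((i + 1 : ℕ)) : K)) ^ (r (i + 1)) ∣ Q * B :=
          (hfac (i + 1) hsucc).trans (dvd_mul_left B Q)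
        exact hshift _ _ h1 h2
    rw [hBcomp]
    refine Finset.prod_dvd_of_coprime ?_ ?_
    · intro i hi j hj hij
      have h' : ((i : K) + 1) ≠ ((j : K) + 1) := by
        intro h; exact hij (Nat.cast_injective (add_right_cancel h))
      exact (coprime_linear' h').pow
    · intro i hi
      have hcop : IsCoprime (((X : Polynomial K) + C ((i : K) + 1)) ^ (r i))
          ((X : Polynomial K) ^ (m + 1)) := by
        have : IsCoprime ((X : Polynomial K) + C ((i : K) + 1)) ((X : Polynomial K) + C 0) :=
          coprime_linear' (Nat.cast_add_one_ne_zero i)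
        simpa using this.pow
      exact hcop.dvd_of_dvd_mul_left (key i (Nat.lt_succ_iff.mp (mem_range.mp hi)))
  have hBdvdP : B ∣ (X : Polynomial K) ^ (m + 1) * B.comp (X + 1) := by
    conv_lhs => rw [hB]
    refine Finset.prod_dvd_of_coprime ?_ ?_
    · intro i hi j hj hij
      have h' : (i : K) ≠ (j : K) := fun h => hij (Nat.cast_injective h)
      exact (coprime_linear' h').pow
    · intro i hi
      match i, hi with
      | 0, _ =>
        simpa using dvd_mul_of_dvd_left (pow_dvd_pow (X : Polynomial K) hr0) (B.comp (X + 1))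
      | (j+1), hj =>
        have hjN : j + 1 ≤ N := Nat.lt_succ_iff.mp (mem_range.mp hj)
        have h1 : ((X : Polynomial K) + C ((j+1 : ℕ) : K)) ^ (r (j+1)) ∣
            ((X : Polynomial K) + C ((j : K) + 1)) ^ (r j) := by
          push_cast
          exact pow_dvd_pow _ (hmono j (j+1) (Nat.le_succ j) hjN)
        have h2 : ((X : Polynomial K) + C ((j : K) + 1)) ^ (r j) ∣ B.comp (X + 1) := by
          have := comp_dvd' (c := (X : Polynomial K) + 1)
            (hfac j (le_trans (Nat.le_succ j) hjN))
          rwa [pow_comp, lin_comp'] at this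
        exact h1.trans (h2.trans (dvd_mul_left _ _))
  refine ⟨part1, ?_⟩
  ext x
  simp only [Set.mem_inter_iff, Set.mem_image, SetLike.mem_coe, Ideal.mem_span_singleton]
  constructor
  · rintro ⟨hx1, p, hp, rfl⟩
    obtain ⟨R, rfl⟩ := hp
    obtain ⟨Q, hQ⟩ := hx1
    obtain ⟨c, hc⟩ := part1 Q R (by rw [hQ, mul_comm])
    exact ⟨(X : Polynomial K) ^ (m + 1) * R, ⟨c, by rw [hc]; ring⟩, rfl⟩
  · rintro ⟨p, ⟨c, rfl⟩, rfl⟩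
    refine ⟨?_, ⟨_, ⟨B.comp (X + 1) * c, by ring⟩, rfl⟩⟩
    have h1 : B ∣ (X : Polynomial K) ^ (m + 1) * B.comp (X + 1) * c :=
      dvd_mul_of_dvd_left hBdvdP c
    have h2 : B ∣ ((X : Polynomial K) ^ (m + 1) * B.comp (X + 1) * c).comp (X - 1) := by
      rw [mul_comp, mul_comp, comp_add_sub']
      exact (dvd_mul_left B _).mul_right _
    simpa [bdiff] using dvd_sub h2 h1
end

section
/- Let d, m_1, …, m_d be positive integers, K a field of characteristic 0, and α_1, …, α_d ∈ K with α_1 = 0 and α_i − α_j ∉ ℤ for all i ≠ j (identifying ℤ with its image in K). Let Δ(P)(t) = P(t−1) − P(t). Suppose Q(t) ∈ K[t] and P(t) = Δ(t^{m_1+1}·R(t)) for some R ∈ K[t], and also P(t) = Δ((t+α_i)^{m_i+1}·R_i(t)) = Δ(t(t+α_i)·S_i(t)) for polynomials R_i, S_i ∈ K[t], for each i = 2,…,d. If P(t) = Δ(t^{m_1+1} Q(t)), then Π_{i=2}^d (t+α_i)^{m_i+1} divides Q(t); i.e., P ∈ Δ(Π_{i=1}^d (t+α_i)^{m_i+1}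 K[t]). -/
open Polynomial Finset

lemma bdiff_const {K : Type*} [Field K] [CharZero K] {A B : Polynomial K}
    (h : bdiff A = bdiff B) : ∃ c : K, A = B + C c := by
  set P := A - B with hP
  have hc : P.comp (X - 1) = P := by
    have : bdiff P = 0 := by
      simp only [bdiff, hP, sub_comp] at h ⊢
      ring_nf
      ring_nf at h
      linear_combination h
    simpa [bdiff, sub_eq_zero] using this
  have heval : ∀ x : K, P.eval (x - 1) = P.eval x := fun x => by
    simpa [eval_comp] using congrArg (Polynomial.eval x) hc
  have hn : ∀ n : ℕ, P.eval (-(n : K)) = P.eval 0 := by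
    intro n
    induction n with
    | zero => simp
    | succ n ih =>
      have h1 := heval (-(n : K))
      push_cast
      rw [show -((n : K) + 1) = -(n : K) - 1 by ring, h1, ih]
  have hz : P - C (P.eval 0) = 0 := by
    apply Polynomial.eq_zero_of_infinite_isRoot
    have hinj : Function.Injective (fun n : ℕ => -(n : K)) := by
      intro a b hab
      exact Nat.cast_injective (neg_injective hab)
    refine (Set.infinite_range_of_injective hinj).mono ?_
    rintro x ⟨n, rfl⟩
    simp [Polynomial.IsRoot, hn n]
  refine ⟨P.eval 0, ?_⟩
  have : P = C (P.eval 0) := by linear_combination hz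
  rw [← this]; ring

/-- Let `d, m_1, …, m_d ≥ 1`, `K` a field of characteristic `0`, `α_1, …, α_d ∈ K`
with `α_1 = 0` and `α_i - α_j ∉ ℤ` for `i ≠ j`.  Suppose `P = Δ(t^{m_1+1}·R)` for some
`R`, and for each `i = 2,…,d` there are `R_i, S_i` with
`P = Δ((t+α_i)^{m_i+1}·R_i) = Δ(t(t+α_i)·S_i)`.  If `P = Δ(t^{m_1+1}·Q)` then
`Π_{i=2}^d (t+α_i)^{m_i+1} ∣ Q`, i.e. `P ∈ Δ(Π_{i=1}^d (t+α_i)^{m_i+1}·K[t])`. -/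
theorem kernel_intersection_shifts {K : Type*} [Field K] [CharZero K]
    (d : ℕ) (hd : 0 < d) (m : Fin d → ℕ) (hm : ∀ i, 1 ≤ m i) (α : Fin d → K)
    (hα0 : α ⟨0, hd⟩ = 0)
    (hαZ : ∀ i j : Fin d, i ≠ j → ∀ n : ℤ, α i - α j ≠ (n : K))
    (P Q : Polynomial K)
    (hR : ∃ R : Polynomial K, P = bdiff ((X : Polynomial K) ^ (m ⟨0, hd⟩ + 1) * R))
    (hRi : ∀ i : Fin d, i ≠ ⟨0, hd⟩ →
        ∃ Ri : Polynomial K, P = bdiff ((X + C (α i)) ^ (m i + 1) * Ri))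
    (hSi : ∀ i : Fin d, i ≠ ⟨0, hd⟩ →
        ∃ Si : Polynomial K, P = bdiff (X * (X + C (α i)) * Si))
    (hQ : P = bdiff ((X : Polynomial K) ^ (m ⟨0, hd⟩ + 1) * Q)) :
    (∏ i ∈ Finset.univ.erase ⟨0, hd⟩, (X + C (α i)) ^ (m i + 1)) ∣ Q ∧
    ∃ T : Polynomial K, P = bdiff ((∏ i, (X + C (α i)) ^ (m i + 1)) * T) := by
  set z : Fin d := ⟨0, hd⟩ with hzdef
  -- each factor divides Q
  have hdvd : ∀ i : Fin d, i ≠ z → (X + C (α i)) ^ (m i + 1) ∣ Q := by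
    intro i hi
    obtain ⟨Ri, hRi'⟩ := hRi i hi
    obtain ⟨Si, hSi'⟩ := hSi i hi
    have hαi : α i ≠ 0 := by
      have := hαZ i z hi 0
      simpa [hα0] using this
    -- from S relation: eval of X^{m+1} Q at -α i is 0
    obtain ⟨c', hc'⟩ := bdiff_const (hQ.symm.trans hSi')
    have hc'0 : c' = 0 := by
      have := congrArg (Polynomial.eval (0 : K)) hc'
      simpa [eval_mul, eval_pow, zero_pow] using this.symm
    have hQeval : Polynomial.eval (-(α i)) ((X : Polynomial K) ^ (m z + 1) * Q) = 0 := by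
      have := congrArg (Polynomial.eval (-(α i))) hc'
      simpa [hc'0, eval_mul] using this
    obtain ⟨c, hc⟩ := bdiff_const (hQ.symm.trans hRi')
    have hc0 : c = 0 := by
      have := congrArg (Polynomial.eval (-(α i))) hc
      rw [hQeval] at this
      simpa [eval_mul, eval_pow, zero_pow] using this.symm
    rw [hc0, map_zero, add_zero] at hc
    have hdvd1 : (X + C (α i)) ^ (m i + 1) ∣ (X : Polynomial K) ^ (m z + 1) * Q :=
      ⟨Ri, hc⟩
    have hcop : IsCoprime ((X + C (α i)) ^ (m i + 1)) ((X : Polynomial K) ^ (m z + 1)) := by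
      have base : IsCoprime (X - C (-(α i))) (X - C (0 : K)) :=
        isCoprime_X_sub_C_of_isUnit_sub (by simpa using (neg_ne_zero.mpr hαi).isUnit)
      rw [map_neg, sub_neg_eq_add, map_zero, sub_zero] at base
      exact base.pow
    exact hcop.dvd_of_dvd_mul_left hdvd1
  have hprod : (∏ i ∈ Finset.univ.erase z, (X + C (α i)) ^ (m i + 1)) ∣ Q := by
    apply Finset.prod_dvd_of_coprime
    · intro i hi j hj hij
      simp only [Finset.coe_erase, Set.mem_diff, Finset.mem_coe] at hi hj
      have hne : α i ≠ α j := fun h => hαZ i j hij 0 (by simp [h])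
      have base : IsCoprime (X - C (-(α i))) (X - C (-(α j))) :=
        isCoprime_X_sub_C_of_isUnit_sub
          (sub_ne_zero_of_ne (fun h => hne (neg_injective h))).isUnit
      rw [map_neg, map_neg, sub_neg_eq_add, sub_neg_eq_add] at base
      exact base.pow
    · intro i hi
      exact hdvd i (Finset.mem_erase.mp hi).1
  refine ⟨hprod, ?_⟩
  obtain ⟨T, hT⟩ := hprod
  refine ⟨T, ?_⟩
  have hsplit : (∏ i, (X + C (α i)) ^ (m i + 1)) =
      (X : Polynomial K) ^ (m z + 1) * ∏ i ∈ Finset.univ.erase z, (X + C (α i)) ^ (m i + 1) := by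
    rw [← Finset.mul_prod_erase Finset.univ _ (Finset.mem_univ z)]
    congr 1
    rw [hα0]
    simp
  rw [hsplit, mul_assoc, ← hT]
  exact hQ
end
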